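/- For any set S of 2n+1 points in general position in the plane and any two consecutive vertices A, B of the convex hull of S, there exists a halving circle of S passing through A and B. -/
import Mathlib


open scoped Classical

noncomputable section

abbrev Pt : Type := EuclideanSpace ℝ (Fin 2)

/-- `p` lies on the circle with center `c` and radius `r`. -/
def onC (c : Pt) (r : ℝ) (p : Pt) : Prop := dist p c = r

/-- `p` lies strictly inside the circle with center `c` and radius `r`. -/
def insideC (c : Pt) (r : ℝ) (p : Pt) : Prop := dist p c < r

/-- `p` lies strictly outside the circle with center `c` and radius `r`. -/
def outsideC (c : Pt) (r : ℝ) (p : Pt) : Prop := r < dist p c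

/-- Four points lie on a common circle. -/
def Concyclic4 (p q u v : Pt) : Prop :=
  ∃ c r, 0 < r ∧ onC c r p ∧ onC c r q ∧ onC c r u ∧ onC c r v

/-- No three points of `S` collinear, no four concyclic. -/
def GenPos (S : Finset Pt) : Prop :=
  (∀ p ∈ S, ∀ q ∈ S, ∀ u ∈ S, p ≠ q → p ≠ u → q ≠ u →
      ¬ Collinear ℝ ({p, q, u} : Set Pt)) ∧
  (∀ p ∈ S, ∀ q ∈ S, ∀ u ∈ S, ∀ v ∈ S,
      p ≠ q → p ≠ u → p ≠ v → q ≠ u → q ≠ v → u ≠ v → ¬ Concyclic4 p q u v)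

/-- The circle `(c, r)` is halving for `S` (with `|S| = 2n+1`). -/
def IsHalving (n : ℕ) (S : Finset Pt) (c : Pt) (r : ℝ) : Prop :=
  0 < r ∧ (S.filter (onC c r)).card = 3 ∧
  (S.filter (insideC c r)).card = n - 1 ∧ (S.filter (outsideC c r)).card = n - 1

/-- The set of halving circles of `S`, encoded as center–radius pairs. -/
def halvingSet (n : ℕ) (S : Finset Pt) : Set (Pt × ℝ) :=
  {cr | IsHalving n S cr.1 cr.2}

/-- Signed area / cross-product test for which side of line `AB` the point `P` is on. -/
def sideVal (A B P : Pt) : ℝ :=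
  (B 0 - A 0) * (P 1 - A 1) - (B 1 - A 1) * (P 0 - A 0)

lemma median_lemma (V : Finset ℝ) (m k : ℕ) (h : V.card = m) (hk : k < m) :
    ∃ v ∈ V, (V.filter (fun x => x < v)).card = k := by
  let e := V.orderIsoOfFin h
  refine ⟨(e ⟨k, hk⟩ : ℝ), (e ⟨k, hk⟩).2, ?_⟩
  have himg : V.filter (fun x => x < (e ⟨k, hk⟩ : ℝ)) =
      (Finset.Iio (⟨k, hk⟩ : Fin m)).image (fun j => (e j : ℝ)) := by
    ext x
    simp only [Finset.mem_filter, Finset.mem_image, Finset.mem_Iio]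
    constructor
    · rintro ⟨hxV, hx⟩
      refine ⟨e.symm ⟨x, hxV⟩, ?_, by simp⟩
      have h2 : e (e.symm ⟨x, hxV⟩) < e ⟨k, hk⟩ := by
        rw [← Subtype.coe_lt_coe]; simpa using hx
      exact e.lt_iff_lt.mp h2
    · rintro ⟨j, hj, rfl⟩
      exact ⟨(e j).2, by exact_mod_cast e.lt_iff_lt.mpr hj⟩
  rw [himg, Finset.card_image_of_injective _
    (fun a b hab => e.injective (Subtype.val_injective hab))]
  simp

lemma dist_coords (p q : Pt) : dist p q = Real.sqrt ((p 0 - q 0)^2 + (p 1 - q 1)^2) := by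
  rw [EuclideanSpace.dist_eq, Fin.sum_univ_two]; simp [Real.dist_eq, sq_abs]

lemma sq_sum_nonneg (x y : ℝ) : 0 ≤ x^2 + y^2 := by positivity

/-- For consecutive hull vertices `A, B` of `S` (all other points of `S` strictly
on one side of line `AB`), there is a halving circle through `A` and `B`. -/
theorem exists_halving_circle_through_hull_edge (n : ℕ) (hn : 1 ≤ n) (S : Finset Pt)
    (hcard : S.card = 2 * n + 1) (hgen : GenPos S)
    (A B : Pt) (hA : A ∈ S) (hB : B ∈ S) (hAB : A ≠ B)
    (hedge : ∀ p ∈ S, p ≠ A → p ≠ B → ∀ q ∈ S, q ≠ A → q ≠ B →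
      0 < sideVal A B p * sideVal A B q) :
    ∃ c r, IsHalving n S c r ∧ onC c r A ∧ onC c r B := by
  classical
  set T : Finset Pt := (S.erase A).erase B with hTdef
  have hTmem : ∀ q, q ∈ T ↔ q ∈ S ∧ q ≠ A ∧ q ≠ B := by
    intro q
    simp only [hTdef, Finset.mem_erase]
    tauto
  have hBeA : B ∈ S.erase A := Finset.mem_erase.mpr ⟨Ne.symm hAB, hB⟩
  have hTcard : T.card = 2 * n - 1 := by
    rw [hTdef, Finset.card_erase_of_mem hBeA, Finset.card_erase_of_mem hA, hcard]
    omega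
  have hTne : T.Nonempty := by
    rw [← Finset.card_pos, hTcard]; omega
  obtain ⟨p₀, hp₀⟩ := hTne
  set ε : ℝ := if 0 < sideVal A B p₀ then 1 else -1 with hεdef
  have hpos : ∀ q ∈ T, 0 < ε * sideVal A B q := by
    intro q hq
    obtain ⟨hqS, hqA, hqB⟩ := (hTmem q).mp hq
    obtain ⟨hpS, hpA, hpB⟩ := (hTmem p₀).mp hp₀
    have h := hedge p₀ hpS hpA hpB q hqS hqA hqB
    have hself := hedge p₀ hpS hpA hpB p₀ hpS hpA hpB
    by_cases h0 : 0 < sideVal A B p₀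
    · rw [hεdef, if_pos h0]; nlinarith
    · rw [hεdef, if_neg h0]
      have : sideVal A B p₀ < 0 := by
        rcases lt_trichotomy (sideVal A B p₀) 0 with h'|h'|h'
        · exact h'
        · simp [h'] at hself
        · exact absurd h' h0
      nlinarith
  -- the family of circles through A and B
  set c : ℝ → Pt := fun t => (WithLp.equiv 2 (Fin 2 → ℝ)).symm
      ![(A 0 + B 0)/2 + t * (ε * (A 1 - B 1)), (A 1 + B 1)/2 + t * (ε * (B 0 - A 0))]
      with hcdef
  have hc0 : ∀ t, c t 0 = (A 0 + B 0)/2 + t * (ε * (A 1 - B 1)) := by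
    intro t; simp [hcdef]
  have hc1 : ∀ t, c t 1 = (A 1 + B 1)/2 + t * (ε * (B 0 - A 0)) := by
    intro t; simp [hcdef]
  set r : ℝ → ℝ := fun t => dist A (c t) with hrdef
  have hAon : ∀ t, onC (c t) (r t) A := fun t => rfl
  -- the discriminant
  set D : ℝ → Pt → ℝ := fun t q =>
    (q 0 - c t 0)^2 + (q 1 - c t 1)^2 - ((A 0 - c t 0)^2 + (A 1 - c t 1)^2) with hDdef
  have hD_eq : ∀ t q, D t q =
      ((q 0)^2 + (q 1)^2 - (A 0)^2 - (A 1)^2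
        - ((q 0 - A 0)*(A 0 + B 0) + (q 1 - A 1)*(A 1 + B 1)))
      - t * (2 * ε * sideVal A B q) := by
    intro t q
    simp only [hDdef, hc0, hc1, sideVal]
    ring
  have hDB : ∀ t, D t B = 0 := by
    intro t; rw [hD_eq]; simp only [sideVal]; ring
  have hdist_on : ∀ t q, dist q (c t) = r t ↔ D t q = 0 := by
    intro t q
    simp only [hrdef, hDdef, dist_coords]
    rw [Real.sqrt_inj (sq_sum_nonneg _ _) (sq_sum_nonneg _ _)]
    constructor <;> intro h <;> linarith
  have hdist_in : ∀ t q, dist q (c t) < r t ↔ D t q < 0 := by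
    intro t q
    simp only [hrdef, hDdef, dist_coords]
    rw [Real.sqrt_lt_sqrt_iff (sq_sum_nonneg _ _)]
    constructor <;> intro h <;> linarith
  have hdist_out : ∀ t q, r t < dist q (c t) ↔ 0 < D t q := by
    intro t q
    simp only [hrdef, hDdef, dist_coords]
    rw [Real.sqrt_lt_sqrt_iff (sq_sum_nonneg _ _)]
    constructor <;> intro h <;> linarith
  have hBon : ∀ t, onC (c t) (r t) B := by
    intro t; exact (hdist_on t B).mpr (hDB t)
  have hrpos : ∀ t, 0 < r t := by
    intro t
    have h0 : (0:ℝ) ≤ r t := dist_nonneg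
    rcases h0.lt_or_eq with h|h
    · exact h
    · exfalso
      have hr' : dist A (c t) = 0 := h.symm
      have hA' : A = c t := dist_eq_zero.mp hr'
      have hB' : B = c t := dist_eq_zero.mp (by
        have hBt : dist B (c t) = r t := hBon t
        rw [hBt, ← h])
      exact hAB (hA'.trans hB'.symm)
  -- tau values
  set τ : Pt → ℝ := fun q =>
      ((q 0)^2 + (q 1)^2 - (A 0)^2 - (A 1)^2
        - ((q 0 - A 0)*(A 0 + B 0) + (q 1 - A 1)*(A 1 + B 1))) / (2 * ε * sideVal A B q)
      with hτdef
  have hden : ∀ q ∈ T, 0 < 2 * ε * sideVal A B q := by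
    intro q hq; have := hpos q hq; linarith
  have hDiff_lt : ∀ t, ∀ q ∈ T, (D t q < 0 ↔ τ q < t) := by
    intro t q hq
    rw [hD_eq, hτdef, sub_neg, div_lt_iff₀ (hden q hq)]
  have hDiff_gt : ∀ t, ∀ q ∈ T, (0 < D t q ↔ t < τ q) := by
    intro t q hq
    rw [hD_eq, hτdef, sub_pos, lt_div_iff₀ (hden q hq)]
  have hDiff_eq : ∀ t, ∀ q ∈ T, (D t q = 0 ↔ τ q = t) := by
    intro t q hq
    constructor
    · intro h
      rcases lt_trichotomy (τ q) t with h'|h'|h'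
      · exact absurd ((hDiff_lt t q hq).mpr h') (by rw [h]; exact lt_irrefl 0)
      · exact h'
      · exact absurd ((hDiff_gt t q hq).mpr h') (by rw [h]; exact lt_irrefl 0)
    · intro h
      rcases lt_trichotomy (D t q) 0 with h'|h'|h'
      · exact absurd ((hDiff_lt t q hq).mp h') (by rw [h]; exact lt_irrefl t)
      · exact h'
      · exact absurd ((hDiff_gt t q hq).mp h') (by rw [h]; exact lt_irrefl t)
  -- injectivity on T
  have hinj : ∀ q ∈ T, ∀ q' ∈ T, τ q = τ q' → q = q' := by
    intro q hq q' hq' hττ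
    by_contra hne
    obtain ⟨hqS, hqA, hqB⟩ := (hTmem q).mp hq
    obtain ⟨hq'S, hq'A, hq'B⟩ := (hTmem q').mp hq'
    apply hgen.2 A hA B hB q hqS q' hq'S hAB (Ne.symm hqA) (Ne.symm hq'A)
        (Ne.symm hqB) (Ne.symm hq'B) hne
    refine ⟨c (τ q), r (τ q), hrpos _, hAon _, hBon _, ?_, ?_⟩
    · exact (hdist_on _ q).mpr ((hDiff_eq _ q hq).mpr rfl)
    · exact (hdist_on _ q').mpr ((hDiff_eq _ q' hq').mpr hττ.symm)
  -- median
  set V : Finset ℝ := T.image τ with hVdef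
  have hinjOn : Set.InjOn τ T := fun a ha b hb => hinj a ha b hb
  have hVcard : V.card = 2 * n - 1 := by
    rw [hVdef, Finset.card_image_of_injOn hinjOn, hTcard]
  obtain ⟨v, hvV, hvcard⟩ := median_lemma V (2*n-1) (n-1) hVcard (by omega)
  obtain ⟨P, hPT, hPv⟩ := Finset.mem_image.mp hvV
  -- counting: points with τ < v
  have hcard_lt : (T.filter (fun q => τ q < v)).card = n - 1 := by
    have himg : (T.filter (fun q => τ q < v)).image τ = V.filter (fun x => x < v) := by
      rw [hVdef, Finset.filter_image]
    rw [← hvcard, ← himg, Finset.card_image_of_injOn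
      (hinjOn.mono (fun x hx => (Finset.mem_filter.mp hx).1))]
  -- the three counts
  set t := v with htdef
  have honP : onC (c t) (r t) P := (hdist_on _ P).mpr ((hDiff_eq _ P hPT).mpr hPv)
  have hPA : P ≠ A := ((hTmem P).mp hPT).2.1
  have hPB : P ≠ B := ((hTmem P).mp hPT).2.2
  have hPS : P ∈ S := ((hTmem P).mp hPT).1
  have hfilter_on : S.filter (onC (c t) (r t)) = {A, B, P} := by
    ext q
    simp only [Finset.mem_filter, Finset.mem_insert, Finset.mem_singleton]
    constructor
    · rintro ⟨hqS, hqon⟩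
      by_cases hqA : q = A
      · exact Or.inl hqA
      by_cases hqB : q = B
      · exact Or.inr (Or.inl hqB)
      have hqT : q ∈ T := (hTmem q).mpr ⟨hqS, hqA, hqB⟩
      have : τ q = t := (hDiff_eq t q hqT).mp ((hdist_on t q).mp hqon)
      exact Or.inr (Or.inr (hinj q hqT P hPT (this.trans hPv.symm)))
    · rintro (rfl|rfl|rfl)
      · exact ⟨hA, hAon t⟩
      · exact ⟨hB, hBon t⟩
      · exact ⟨hPS, honP⟩
  have hcard_on : (S.filter (onC (c t) (r t))).card = 3 := by
    rw [hfilter_on]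
    rw [Finset.card_insert_of_notMem (by simp [hAB, Ne.symm hPA]),
        Finset.card_insert_of_notMem (by simp [Ne.symm hPB])]
    rfl
  have hfilter_in : S.filter (insideC (c t) (r t)) = T.filter (fun q => τ q < t) := by
    ext q
    simp only [Finset.mem_filter]
    constructor
    · rintro ⟨hqS, hqin⟩
      by_cases hqA : q = A
      · exfalso; subst hqA
        exact absurd (hAon t) (by rw [onC]; exact ne_of_lt hqin)
      by_cases hqB : q = B
      · exfalso; subst hqB
        exact absurd (hBon t) (by rw [onC]; exact ne_of_lt hqin)
      have hqT : q ∈ T := (hTmem q).mpr ⟨hqS, hqA, hqB⟩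
      exact ⟨hqT, (hDiff_lt t q hqT).mp ((hdist_in t q).mp hqin)⟩
    · rintro ⟨hqT, hlt⟩
      exact ⟨((hTmem q).mp hqT).1, (hdist_in t q).mpr ((hDiff_lt t q hqT).mpr hlt)⟩
  have hfilter_out : S.filter (outsideC (c t) (r t)) = T.filter (fun q => t < τ q) := by
    ext q
    simp only [Finset.mem_filter]
    constructor
    · rintro ⟨hqS, hqout⟩
      by_cases hqA : q = A
      · exfalso; subst hqA
        exact absurd (hAon t) (by rw [onC]; exact (ne_of_lt hqout).symm)
      by_cases hqB : q = B
      · exfalso; subst hqB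
        exact absurd (hBon t) (by rw [onC]; exact (ne_of_lt hqout).symm)
      have hqT : q ∈ T := (hTmem q).mpr ⟨hqS, hqA, hqB⟩
      exact ⟨hqT, (hDiff_gt t q hqT).mp ((hdist_out t q).mp hqout)⟩
    · rintro ⟨hqT, hlt⟩
      exact ⟨((hTmem q).mp hqT).1, (hdist_out t q).mpr ((hDiff_gt t q hqT).mpr hlt)⟩
  have hcard_out : (T.filter (fun q => t < τ q)).card = n - 1 := by
    have hsplit : (T.filter (fun q => τ q < t)).card
        + (T.filter (fun q => ¬ τ q < t)).card = T.card :=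
      Finset.card_filter_add_card_filter_not _
    have hneg : T.filter (fun q => ¬ τ q < t) = insert P (T.filter (fun q => t < τ q)) := by
      ext q
      simp only [Finset.mem_filter, Finset.mem_insert]
      constructor
      · rintro ⟨hqT, hnlt⟩
        rcases lt_trichotomy (τ q) t with h'|h'|h'
        · exact absurd h' hnlt
        · exact Or.inl (hinj q hqT P hPT (h'.trans hPv.symm))
        · exact Or.inr ⟨hqT, h'⟩
      · rintro (rfl|⟨hqT, h'⟩)
        · exact ⟨hPT, by rw [hPv]; exact lt_irrefl _⟩
        · exact ⟨hqT, not_lt.mpr (le_of_lt h')⟩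
    have hPnot : P ∉ T.filter (fun q => t < τ q) := by
      simp only [Finset.mem_filter, hPv]
      exact fun h => lt_irrefl _ h.2
    have := Finset.card_insert_of_notMem hPnot
    rw [hneg, this, hcard_lt, hTcard] at hsplit
    omega
  refine ⟨c t, r t, ⟨hrpos t, hcard_on, ?_, ?_⟩, hAon t, hBon t⟩
  · rw [hfilter_in, hcard_lt]
  · rw [hfilter_out, hcard_out]
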